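/- Let V be an n-dimensional real inner product space and let A, B be symmetric linear endomorphisms of V with A² = B², A ≠ B, A ≠ −B, and with common kernel Δ = ker A = ker B of dimension n − 2 (so A and B have rank 2). Let ψ, ψ̄ : V → ℝ be nonzero linear functionals with ker ψ ≠ ker ψ̄ satisfying ψ(X)·A(Y) − ψ(Y)·A(X) = ψ̄(X)·B(Y) − ψ̄(Y)·B(X) for all X, Y ∈ V. Then Δ = ker ψ ∩ ker ψ̄. -/

import Mathlib

open scoped RealInnerProductSpace

/-- Algebraic content of the Codazzi equation: if `A ≠ ±B` are symmetric with
`A² = B²` and common kernel `Δ` of dimension `n − 2`, and nonzero functionals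
`ψ ≠ ψ̄` (with different kernels) satisfy
`ψ(X)·A(Y) − ψ(Y)·A(X) = ψ̄(X)·B(Y) − ψ̄(Y)·B(X)`, then
`Δ = ker ψ ∩ ker ψ̄`. -/
theorem codazzi_kernel_intersection
    {V : Type*} [NormedAddCommGroup V] [InnerProductSpace ℝ V]
    [FiniteDimensional ℝ V]
    {n : ℕ} (hn : Module.finrank ℝ V = n)
    (A B : V →ₗ[ℝ] V)
    (hA : ∀ X Y : V, ⟪A X, Y⟫ = ⟪X, A Y⟫)
    (hB : ∀ X Y : V, ⟪B X, Y⟫ = ⟪X, B Y⟫)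
    (hsq : A ∘ₗ A = B ∘ₗ B)
    (hAB : A ≠ B) (hAB' : A ≠ -B)
    (hker : LinearMap.ker A = LinearMap.ker B)
    (hdimker : Module.finrank ℝ ↥(LinearMap.ker A) = n - 2)
    (hrkA : Module.finrank ℝ ↥(LinearMap.range A) = 2)
    (hrkB : Module.finrank ℝ ↥(LinearMap.range B) = 2)
    (ψ ψbar : V →ₗ[ℝ] ℝ) (hψ : ψ ≠ 0) (hψbar : ψbar ≠ 0)
    (hkers : LinearMap.ker ψ ≠ LinearMap.ker ψbar)
    (h : ∀ X Y : V,
      ψ X • A Y - ψ Y • A X = ψbar X • B Y - ψbar Y • B X) :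
    LinearMap.ker A = LinearMap.ker ψ ⊓ LinearMap.ker ψbar := by
  -- B ≠ 0
  have hBne : B ≠ 0 := by
    intro h0
    rw [h0, LinearMap.range_zero] at hrkB
    simp at hrkB
  obtain ⟨x0, hx0⟩ : ∃ x, B x ≠ 0 := by
    by_contra hc
    push_neg at hc
    exact hBne (LinearMap.ext hc)
  have hB2x : B (B x0) ≠ 0 := by
    intro h0
    apply hx0
    have h1 := hB (B x0) x0
    rw [h0] at h1
    simp at h1
    exact norm_eq_zero.mp ((pow_eq_zero_iff two_ne_zero).mp h1.symm)
  apply le_antisymm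
  · -- ker A ≤ ker ψ ⊓ ker ψbar
    intro x hx
    have hxA : A x = 0 := hx
    have hxB : B x = 0 := by rw [hker] at hx; exact hx
    have key : ∀ Y, ψ x • A Y = ψbar x • B Y := by
      intro Y
      have h2 := h x Y
      rw [hxA, hxB] at h2
      simpa using h2
    have hψx : ψ x = 0 := by
      by_contra hc
      set t : ℝ := ψbar x / ψ x with ht
      have hAt : A = t • B := by
        ext Y
        have h3 := key Y
        have : A Y = (ψ x)⁻¹ • (ψbar x • B Y) := by
          rw [← h3, smul_smul, inv_mul_cancel₀ hc, one_smul]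
        rw [this]
        simp [ht, smul_smul, div_eq_inv_mul, mul_comm]
      have hsq2 : ∀ Y, (t ^ 2) • (B (B Y)) = B (B Y) := by
        intro Y
        have h4 : A (A Y) = B (B Y) := congrFun (congrArg DFunLike.coe hsq) Y
        rw [hAt] at h4
        simp only [LinearMap.smul_apply, map_smul, smul_smul] at h4
        rw [pow_two]
        exact h4
      have ht2 : t ^ 2 = 1 := by
        have h5 := hsq2 x0
        have h6 : (t ^ 2 - 1) • B (B x0) = 0 := by
          rw [sub_smul, one_smul, h5, sub_self]
        rcases smul_eq_zero.mp h6 with hh | hh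
        · linarith
        · exact absurd hh hB2x
      have hcases : t = 1 ∨ t = -1 := by
        have h7 : (t - 1) * (t + 1) = 0 := by nlinarith
        rcases mul_eq_zero.mp h7 with hh | hh
        · left; linarith
        · right; linarith
      rcases hcases with h1 | h1
      · exact hAB (by rw [hAt, h1, one_smul])
      · exact hAB' (by rw [hAt, h1, neg_smul, one_smul])
    have hψbarx : ψbar x = 0 := by
      by_contra hc
      have h5 := key x0
      rw [hψx, zero_smul] at h5
      exact hx0 (by
        have := smul_eq_zero.mp h5.symm
        tauto)
    exact ⟨hψx, hψbarx⟩
  · -- ker ψ ⊓ ker ψbar ≤ ker A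
    intro x hx
    obtain ⟨hx1, hx2⟩ := hx
    have hx1' : ψ x = 0 := hx1
    have hx2' : ψbar x = 0 := hx2
    -- find y with ψ y = 0, ψbar y ≠ 0
    have hnotle : ¬ (LinearMap.ker ψ ≤ LinearMap.ker ψbar) := by
      intro hle
      apply hkers
      apply Submodule.eq_of_le_of_finrank_eq hle
      have r1 : Module.finrank ℝ ↥(LinearMap.range ψ) = 1 := by
        obtain ⟨v, hv⟩ : ∃ v, ψ v ≠ 0 := by
          by_contra hc; push_neg at hc; exact hψ (LinearMap.ext hc)
        have : LinearMap.range ψ = ⊤ := LinearMap.range_eq_top.mpr fun c =>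
          ⟨(c / ψ v) • v, by simp [div_mul_eq_mul_div, hv]⟩
        rw [this]; simp
      have r2 : Module.finrank ℝ ↥(LinearMap.range ψbar) = 1 := by
        obtain ⟨v, hv⟩ : ∃ v, ψbar v ≠ 0 := by
          by_contra hc; push_neg at hc; exact hψbar (LinearMap.ext hc)
        have : LinearMap.range ψbar = ⊤ := LinearMap.range_eq_top.mpr fun c =>
          ⟨(c / ψbar v) • v, by simp [div_mul_eq_mul_div, hv]⟩
        rw [this]; simp
      have e1 := LinearMap.finrank_range_add_finrank_ker ψ
      have e2 := LinearMap.finrank_range_add_finrank_ker ψbar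
      rw [r1] at e1; rw [r2] at e2
      omega
    obtain ⟨y, hy1, hy2⟩ : ∃ y, ψ y = 0 ∧ ψbar y ≠ 0 := by
      rw [SetLike.not_le_iff_exists] at hnotle
      obtain ⟨y, hy1, hy2⟩ := hnotle
      exact ⟨y, hy1, hy2⟩
    have h6 := h x y
    rw [hx1', hx2', hy1] at h6
    simp only [zero_smul, zero_sub, sub_zero, sub_self] at h6
    have hBx : B x = 0 := by
      have h7 : ψbar y • B x = 0 := by
        simpa [neg_eq_zero] using h6.symm
      rcases smul_eq_zero.mp h7 with hh | hh
      · exact absurd hh hy2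
      · exact hh
    rw [hker]
    exact hBx
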